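/- Fix ε > 0, κ ∈ ℝ and r₀ ∈ ℝ, and define q : ℝ → ℝ by q(r) := tanh((r − r₀)/ε). Then q, together with the wave speed c = κ, solves the traveling-wave equation: for every r ∈ ℝ, ε(−q''(r) − κ q'(r)) + (1/ε)(q(r)² − 1)(2 q(r) − εκ) = 0. -/

import Mathlib

lemma my_hasDerivAt_tanh (x : ℝ) :
    HasDerivAt Real.tanh (1 - Real.tanh x ^ 2) x := by
  have hc : Real.cosh x ≠ 0 := ne_of_gt (Real.cosh_pos x)
  have h := (Real.hasDerivAt_sinh x).div (Real.hasDerivAt_cosh x) hc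
  have heq : (Real.cosh x * Real.cosh x - Real.sinh x * Real.sinh x) / Real.cosh x ^ 2
      = 1 - Real.tanh x ^ 2 := by
    rw [Real.tanh_eq_sinh_div_cosh]
    have h2 := Real.cosh_sq_sub_sinh_sq x
    field_simp
  have : HasDerivAt (fun y => Real.sinh y / Real.cosh y)
      (1 - Real.tanh x ^ 2) x := heq ▸ h
  exact this.congr_of_eventuallyEq
    (Filter.Eventually.of_forall fun y => (Real.tanh_eq_sinh_div_cosh y))

lemma q_hasDerivAt (ε r₀ : ℝ) (hε : 0 < ε) (r : ℝ) :
    HasDerivAt (fun s : ℝ => Real.tanh ((s - r₀) / ε))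
      ((1 - Real.tanh ((r - r₀) / ε) ^ 2) / ε) r := by
  have h1 : HasDerivAt (fun s : ℝ => (s - r₀) / ε) (1 / ε) r := by
    simpa using ((hasDerivAt_id r).sub_const r₀).div_const ε
  have := (my_hasDerivAt_tanh ((r - r₀) / ε)).comp r h1
  simpa [div_eq_mul_inv, mul_comm, Function.comp_def] using this

theorem travelling_wave_profile (ε κ r₀ : ℝ) (hε : 0 < ε) :
    ∀ r : ℝ,
      ε * (-(deriv (deriv (fun s : ℝ => Real.tanh ((s - r₀) / ε))) r)
            - κ * deriv (fun s : ℝ => Real.tanh ((s - r₀) / ε)) r)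
        + (1 / ε) * ((Real.tanh ((r - r₀) / ε)) ^ 2 - 1)
            * (2 * Real.tanh ((r - r₀) / ε) - ε * κ) = 0 := by
  intro r
  have hεne : ε ≠ 0 := ne_of_gt hε
  have hd1 : deriv (fun s : ℝ => Real.tanh ((s - r₀) / ε))
      = fun s => (1 - Real.tanh ((s - r₀) / ε) ^ 2) / ε := by
    funext s
    exact (q_hasDerivAt ε r₀ hε s).deriv
  have hd2 : deriv (deriv (fun s : ℝ => Real.tanh ((s - r₀) / ε))) r
      = (-2 * Real.tanh ((r - r₀) / ε) * (1 - Real.tanh ((r - r₀) / ε) ^ 2) / ε) / ε := by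
    rw [hd1]
    have : HasDerivAt (fun s => (1 - Real.tanh ((s - r₀) / ε) ^ 2) / ε)
        ((-2 * Real.tanh ((r - r₀) / ε) * (1 - Real.tanh ((r - r₀) / ε) ^ 2) / ε) / ε) r := by
      have h := ((q_hasDerivAt ε r₀ hε r).pow 2)
      have h2 : HasDerivAt (fun s => (1 - Real.tanh ((s - r₀) / ε) ^ 2))
          (0 - (2:ℝ) * Real.tanh ((r - r₀) / ε) ^ (2-1) * ((1 - Real.tanh ((r - r₀) / ε) ^ 2) / ε)) r :=
        (hasDerivAt_const r 1).sub h
      have := h2.div_const ε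
      exact this.congr_deriv (by ring)
    exact this.deriv
  rw [hd2, hd1]
  have t := Real.tanh ((r - r₀) / ε)
  field_simp
  ring
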